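/- For a continuous function V : [0,1] → [0,∞) with V(1) = 0, the quantity 2∫₀¹ √(V(s)) ds equals the infimum over T > 0 of the minimum of ∫₀ᵀ (V(w(t)) + |w'(t)|²) dt over all Lipschitz functions w : [0,T] → [0,1] with w(0) = 0 and w(T) = 1. -/

import Mathlib

open MeasureTheory Filter Topology Metric Set intervalIntegral
noncomputable section

/-- The admissible optimal-profile energies: values ∫₀ᵀ (V(w) + |w'|²) dt over T > 0 and
Lipschitz w : [0,T] → [0,1] with w(0) = 0, w(T) = 1. -/
def profileEnergies (V : ℝ → ℝ) : Set ℝ :=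
  {c : ℝ | ∃ T : ℝ, 0 < T ∧ ∃ w : ℝ → ℝ, (∃ L : NNReal, LipschitzOnWith L w (Icc 0 T)) ∧
    (∀ t ∈ Icc (0:ℝ) T, w t ∈ Icc (0:ℝ) 1) ∧ w 0 = 0 ∧ w T = 1 ∧
    c = ∫ t in (0:ℝ)..T, (V (w t) + (deriv w t) ^ 2)}



theorem abs_deriv_le_of_lipschitz {K : NNReal} {h : ℝ → ℝ} (hl : LipschitzWith K h) (t : ℝ) :
    |deriv h t| ≤ K := by
  by_cases hd : DifferentiableAt ℝ h t
  · have hda := hd.hasDerivAt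
    rw [hasDerivAt_iff_tendsto_slope] at hda
    have h1 : Tendsto (fun y => |slope h t y|) (𝓝[≠] t) (𝓝 |deriv h t|) :=
      (continuous_abs.tendsto _).comp hda
    refine le_of_tendsto h1 ?_
    filter_upwards [self_mem_nhdsWithin] with y hy
    have hyt : y ≠ t := hy
    have : |h y - h t| ≤ K * |y - t| := by
      have := hl.dist_le_mul y t
      simpa [Real.dist_eq] using this
    rw [slope_def_field, div_eq_mul_inv, abs_mul, abs_inv]
    rw [← div_eq_mul_inv, div_le_iff₀ (by simp [sub_ne_zero.2 hyt] : (0:ℝ) < |y - t|)]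
    exact this
  · rw [deriv_zero_of_not_differentiableAt hd]
    simpa using K.coe_nonneg

theorem lipschitz_integral_deriv {K : NNReal} {h : ℝ → ℝ} (hl : LipschitzWith K h) (a b : ℝ) :
    ∫ t in a..b, deriv h t = h b - h a := by
  have hcont : Continuous h := hl.continuous
  set δ : ℕ → ℝ := fun n => ((n : ℝ) + 1)⁻¹ with hδdef
  have hδpos : ∀ n, 0 < δ n := fun n => by positivity
  have hδ0 : Tendsto δ atTop (𝓝 0) := by
    simpa [hδdef, one_div] using tendsto_one_div_add_atTop_nhds_zero_nat (𝕜 := ℝ)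
  set F : ℕ → ℝ → ℝ := fun n t => (h (t + δ n) - h t) / δ n with hFdef
  have hInt : ∀ c d : ℝ, IntervalIntegrable h volume c d := fun c d =>
    hcont.intervalIntegrable _ _
  -- value of the integral of F n
  have key : ∀ n, ∫ t in a..b, F n t =
      (δ n)⁻¹ * (∫ t in b..(b + δ n), h t) - (δ n)⁻¹ * (∫ t in a..(a + δ n), h t) := by
    intro n
    have e1 : ∫ t in a..b, F n t = (δ n)⁻¹ * ∫ t in a..b, (h (t + δ n) - h t) := by
      simp only [hFdef, div_eq_inv_mul]
      exact intervalIntegral.integral_const_mul _ _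
    have hc1 : Continuous fun t : ℝ => h (t + δ n) := hcont.comp (continuous_add_right _)
    rw [e1, intervalIntegral.integral_sub (hc1.intervalIntegrable _ _) (hInt a b)]
    rw [intervalIntegral.integral_comp_add_right h (δ n)]
    have h1 : ∫ t in (a + δ n)..(b + δ n), h t =
        (∫ t in (a + δ n)..b, h t) + ∫ t in b..(b + δ n), h t :=
      (intervalIntegral.integral_add_adjacent_intervals (hInt _ _) (hInt _ _)).symm
    have h2 : ∫ t in a..b, h t =
        (∫ t in a..(a + δ n), h t) + ∫ t in (a + δ n)..b, h t :=
      (intervalIntegral.integral_add_adjacent_intervals (hInt _ _) (hInt _ _)).symm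
    rw [h1, h2]; ring
  -- averages converge to the endpoint values
  have avg : ∀ c : ℝ, Tendsto (fun n => (δ n)⁻¹ * ∫ t in c..(c + δ n), h t) atTop (𝓝 (h c)) := by
    intro c
    rw [tendsto_iff_dist_tendsto_zero]
    apply squeeze_zero (fun n => dist_nonneg) (g := fun n => (K : ℝ) * δ n)
    · intro n
      have hb : ∀ x ∈ Set.uIoc c (c + δ n), ‖h x - h c‖ ≤ (K : ℝ) * δ n := by
        intro x hx
        rw [Set.uIoc_of_le (by linarith [hδpos n])] at hx
        have : |h x - h c| ≤ K * |x - c| := by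
          simpa [Real.dist_eq] using hl.dist_le_mul x c
        refine this.trans ?_
        have : |x - c| ≤ δ n := by
          rw [abs_of_nonneg (by linarith [hx.1])]
          linarith [hx.2]
        exact mul_le_mul_of_nonneg_left this K.coe_nonneg
      have hnorm := intervalIntegral.norm_integral_le_of_norm_le_const hb
      have e2 : ∫ t in c..(c + δ n), (h t - h c) =
          (∫ t in c..(c + δ n), h t) - (δ n) * h c := by
        rw [intervalIntegral.integral_sub (hInt _ _) (intervalIntegrable_const)]
        simp [mul_comm]
      rw [Real.dist_eq]
      have : (δ n)⁻¹ * (∫ t in c..(c + δ n), h t) - h c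
          = (δ n)⁻¹ * ∫ t in c..(c + δ n), (h t - h c) := by
        rw [e2, mul_sub, ← mul_assoc, inv_mul_cancel₀ (hδpos n).ne', one_mul]
      rw [this, abs_mul, abs_inv, abs_of_pos (hδpos n)]
      rw [inv_mul_le_iff₀ (hδpos n)]
      calc |∫ t in c..(c + δ n), (h t - h c)| ≤ (K * δ n) * |c + δ n - c| := hnorm
        _ = (K * δ n) * δ n := by rw [show c + δ n - c = δ n by ring, abs_of_pos (hδpos n)]
        _ = δ n * (K * δ n) := by ring
    · simpa using (tendsto_const_nhds (x := (K:ℝ))).mul hδ0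
  have lim1 : Tendsto (fun n => ∫ t in a..b, F n t) atTop (𝓝 (h b - h a)) := by
    simp only [key]
    exact (avg b).sub (avg a)
  -- dominated convergence
  have lim2 : Tendsto (fun n => ∫ t in a..b, F n t) atTop (𝓝 (∫ t in a..b, deriv h t)) := by
    apply intervalIntegral.tendsto_integral_filter_of_dominated_convergence
      (bound := fun _ => (K : ℝ))
    · refine Eventually.of_forall fun n => ?_
      have hc1 : Continuous fun t : ℝ => h (t + δ n) := hcont.comp (continuous_add_right _)
      exact ((hc1.sub hcont).div_const _).aestronglyMeasurable
    · refine Eventually.of_forall fun n => Eventually.of_forall fun t _ => ?_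
      have : |h (t + δ n) - h t| ≤ (K : ℝ) * δ n := by
        have := hl.dist_le_mul (t + δ n) t
        simpa [Real.dist_eq, abs_of_pos (hδpos n)] using this
      rw [Real.norm_eq_abs, hFdef]
      simp only
      rw [abs_div, abs_of_pos (hδpos n), div_le_iff₀ (hδpos n)]
      simpa [mul_comm] using this
    · exact intervalIntegrable_const
    · filter_upwards [hl.ae_differentiableAt_real] with t ht _
      have hda := ht.hasDerivAt
      rw [hasDerivAt_iff_tendsto_slope] at hda
      have hseq : Tendsto (fun n => t + δ n) atTop (𝓝[≠] t) := by
        apply tendsto_nhdsWithin_of_tendsto_nhds_of_eventually_within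
        · simpa using (tendsto_const_nhds (x := t)).add hδ0
        · exact Eventually.of_forall fun n => by
            simp only [Set.mem_compl_iff, Set.mem_singleton_iff]
            intro hc; nlinarith [hδpos n]
      have := hda.comp hseq
      convert this using 1
      funext n
      rw [Function.comp_apply, slope_def_field]
      simp [hFdef, add_sub_cancel_left]
  exact tendsto_nhds_unique lim2 lim1

/-- clamped extension of V -/
def clampV (V : ℝ → ℝ) : ℝ → ℝ := fun s => V (min 1 (max 0 s))

lemma clamp_mem (s : ℝ) : min 1 (max 0 s) ∈ Icc (0:ℝ) 1 := by
  constructor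
  · exact le_min one_pos.le (le_max_left 0 s)
  · exact min_le_left _ _

lemma clampV_continuous {V : ℝ → ℝ} (hVcont : ContinuousOn V (Icc 0 1)) :
    Continuous (clampV V) := by
  apply hVcont.comp_continuous
  · exact (continuous_const.min (continuous_const.max continuous_id))
  · exact clamp_mem

lemma clampV_eq {V : ℝ → ℝ} {s : ℝ} (hs : s ∈ Icc (0:ℝ) 1) : clampV V s = V s := by
  unfold clampV
  rw [max_eq_right hs.1, min_eq_right hs.2]

lemma clampV_nonneg {V : ℝ → ℝ} (hVnonneg : ∀ s ∈ Icc (0:ℝ) 1, 0 ≤ V s) (s : ℝ) :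
    0 ≤ clampV V s := hVnonneg _ (clamp_mem s)

lemma clampV_bdd {V : ℝ → ℝ} (hVcont : ContinuousOn V (Icc 0 1)) :
    ∃ M : ℝ, 0 ≤ M ∧ ∀ s, clampV V s ≤ M := by
  obtain ⟨M, hM⟩ := (isCompact_Icc.image_of_continuousOn hVcont).bddAbove
  refine ⟨max M 0, le_max_right _ _, fun s => ?_⟩
  exact le_trans (hM (Set.mem_image_of_mem V (clamp_mem s))) (le_max_left _ _)

section Main

/-- Lower bound: every admissible energy is at least `2∫₀¹ √V`. -/
lemma lower_bound {V : ℝ → ℝ} (hVcont : ContinuousOn V (Icc 0 1))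
    (hVnonneg : ∀ s ∈ Icc (0:ℝ) 1, 0 ≤ V s) {T : ℝ} (hT : 0 < T) {w : ℝ → ℝ} {L : NNReal}
    (hL : LipschitzOnWith L w (Icc 0 T))
    (hmaps : ∀ t ∈ Icc (0:ℝ) T, w t ∈ Icc (0:ℝ) 1) (h0 : w 0 = 0) (h1 : w T = 1) :
    2 * (∫ s in (0:ℝ)..1, Real.sqrt (V s)) ≤ ∫ t in (0:ℝ)..T, (V (w t) + (deriv w t) ^ 2) := by
  obtain ⟨M, hM0, hM⟩ := clampV_bdd hVcont
  set g : ℝ → ℝ := fun s => Real.sqrt (clampV V s) with hgdef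
  have hgcont : Continuous g := (clampV_continuous hVcont).sqrt
  have hgnonneg : ∀ s, 0 ≤ g s := fun s => Real.sqrt_nonneg _
  have hgbdd : ∀ s, g s ≤ Real.sqrt M := fun s => Real.sqrt_le_sqrt (hM s)
  set G : ℝ → ℝ := fun x => ∫ s in (0:ℝ)..x, g s with hGdef
  have hGderiv : ∀ x, HasDerivAt G (g x) x := fun x =>
    (hgcont.integral_hasStrictDerivAt 0 x).hasDerivAt
  -- G is Lipschitz
  have hGlip : LipschitzWith (Real.toNNReal (Real.sqrt M)) G := by
    apply LipschitzWith.of_dist_le_mul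
    intro x y
    rw [Real.dist_eq, Real.dist_eq, hGdef]
    have : (∫ s in (0:ℝ)..x, g s) - ∫ s in (0:ℝ)..y, g s = ∫ s in y..x, g s := by
      rw [← intervalIntegral.integral_add_adjacent_intervals
        (hgcont.intervalIntegrable 0 y) (hgcont.intervalIntegrable y x)]
      ring
    rw [this]
    have := intervalIntegral.norm_integral_le_of_norm_le_const
      (C := Real.sqrt M) (f := g) (a := y) (b := x) ?_
    · simpa [Real.norm_eq_abs, Real.coe_toNNReal _ (Real.sqrt_nonneg M), abs_sub_comm x y]
        using this
    · intro s _
      rw [Real.norm_eq_abs, abs_of_nonneg (hgnonneg s)]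
      exact hgbdd s
  -- extend w
  obtain ⟨u, hu, hwu⟩ := hL.extend_real
  have huT : u T = 1 := by rw [← hwu (right_mem_Icc.2 hT.le), h1]
  have hu0 : u 0 = 0 := by rw [← hwu (left_mem_Icc.2 hT.le), h0]
  set h : ℝ → ℝ := G ∘ u with hhdef
  have hhlip : LipschitzWith (Real.toNNReal (Real.sqrt M) * L) h := hGlip.comp hu
  have hFTC : ∫ t in (0:ℝ)..T, deriv h t = ∫ s in (0:ℝ)..1, g s := by
    rw [lipschitz_integral_deriv hhlip 0 T]
    simp [hhdef, huT, hu0, hGdef]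
  -- a.e. pointwise inequality on [0, T]
  have hae : ∀ᵐ t ∂(volume.restrict (Icc (0:ℝ) T)),
      2 * deriv h t ≤ V (w t) + (deriv w t) ^ 2 := by
    have hIoo : ∀ᵐ t ∂(volume.restrict (Icc (0:ℝ) T)), t ∈ Ioo (0:ℝ) T := by
      refine (ae_restrict_iff' measurableSet_Icc).2 ?_
      have h2 : ∀ᵐ t ∂(volume : Measure ℝ), t ≠ 0 ∧ t ≠ T := by
        rw [ae_iff]
        have : {t : ℝ | ¬(t ≠ 0 ∧ t ≠ T)} ⊆ {0} ∪ {T} := by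
          intro t ht
          simp only [Set.mem_setOf_eq, not_and_or, not_not] at ht
          rcases ht with h | h <;> simp [h]
        refine measure_mono_null this ?_
        rw [measure_union_null_iff]
        constructor <;> exact measure_singleton _
      filter_upwards [h2] with t ht hmem
      exact ⟨lt_of_le_of_ne hmem.1 (Ne.symm ht.1), lt_of_le_of_ne hmem.2 ht.2⟩
    filter_upwards [hIoo, ae_restrict_of_ae hu.ae_differentiableAt_real] with t htIoo htd
    have htIcc : t ∈ Icc (0:ℝ) T := Ioo_subset_Icc_self htIoo
    have hnhds : Icc (0:ℝ) T ∈ 𝓝 t := Icc_mem_nhds htIoo.1 htIoo.2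
    have hwequ : w =ᶠ[𝓝 t] u := eventually_of_mem hnhds fun x hx => hwu hx
    have hderiv_eq : deriv w t = deriv u t := hwequ.deriv_eq
    have hut : u t = w t := (hwu htIcc).symm
    have hchain : HasDerivAt h (g (u t) * deriv u t) t :=
      (hGderiv (u t)).comp t htd.hasDerivAt
    rw [hchain.deriv]
    have hwt : w t ∈ Icc (0:ℝ) 1 := hmaps t htIcc
    have hgu : g (u t) = Real.sqrt (V (w t)) := by
      rw [hut, hgdef]; simp only
      rw [clampV_eq hwt]
    rw [hgu, hderiv_eq]
    have hsq := Real.sq_sqrt (hVnonneg _ hwt)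
    nlinarith [sq_nonneg (Real.sqrt (V (w t)) - deriv u t)]
  -- integrabilities
  have hmeas_derivh : IntervalIntegrable (deriv h) volume 0 T := by
    rw [intervalIntegrable_iff, Set.uIoc_of_le hT.le]
    apply Integrable.mono' (show Integrable (fun _ : ℝ => ((Real.toNNReal (Real.sqrt M) * L : NNReal) : ℝ)) (volume.restrict (Ioc 0 T)) from integrableOn_const measure_Ioc_lt_top.ne)
    · exact (measurable_deriv h).aestronglyMeasurable
    · exact Eventually.of_forall fun t => by
        rw [Real.norm_eq_abs]; exact abs_deriv_le_of_lipschitz hhlip t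
  have hint_energy : IntervalIntegrable (fun t => V (w t) + (deriv w t) ^ 2) volume 0 T := by
    rw [intervalIntegrable_iff, Set.uIoc_of_le hT.le]
    apply Integrable.mono' (show Integrable (fun _ : ℝ => (M + (L:ℝ)^2)) (volume.restrict (Ioc 0 T)) from integrableOn_const measure_Ioc_lt_top.ne)
    · apply AEStronglyMeasurable.add
      · have hwcont : ContinuousOn (fun t => V (w t)) (Ioc (0:ℝ) T) := by
          apply ContinuousOn.mono _ Ioc_subset_Icc_self
          exact hVcont.comp hL.continuousOn hmaps
        exact hwcont.aestronglyMeasurable measurableSet_Ioc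
      · exact ((measurable_deriv w).pow_const 2).aestronglyMeasurable
    · have hIoo : ∀ᵐ t ∂(volume.restrict (Ioc (0:ℝ) T)), t ∈ Ioo (0:ℝ) T := by
        refine (ae_restrict_iff' measurableSet_Ioc).2 ?_
        have h2 : ∀ᵐ t ∂(volume : Measure ℝ), t ≠ T := by
          rw [ae_iff]; simpa using measure_singleton T
        filter_upwards [h2] with t ht hmem
        exact ⟨hmem.1, lt_of_le_of_ne hmem.2 ht⟩
      filter_upwards [hIoo] with t ht
      have htIcc : t ∈ Icc (0:ℝ) T := Ioo_subset_Icc_self ht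
      have hVle : V (w t) ≤ M := by
        rw [← clampV_eq (V := V) (hmaps t htIcc)]; exact hM _
      have hV0 : 0 ≤ V (w t) := hVnonneg _ (hmaps t htIcc)
      have hdw : |deriv w t| ≤ (L : ℝ) := by
        have hnhds : Icc (0:ℝ) T ∈ 𝓝 t := Icc_mem_nhds ht.1 ht.2
        have hwequ : w =ᶠ[𝓝 t] u := eventually_of_mem hnhds fun x hx => hwu hx
        rw [hwequ.deriv_eq]
        exact abs_deriv_le_of_lipschitz hu t
      rw [Real.norm_eq_abs]
      rw [abs_of_nonneg (by positivity)]
      have : (deriv w t)^2 ≤ (L:ℝ)^2 := by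
        rw [← sq_abs]; exact pow_le_pow_left₀ (abs_nonneg _) hdw 2
      linarith
  -- conclude
  have hmono := intervalIntegral.integral_mono_ae_restrict hT.le
    ((hmeas_derivh.const_mul 2)) hint_energy ?_
  · calc 2 * ∫ s in (0:ℝ)..1, Real.sqrt (V s) = 2 * ∫ s in (0:ℝ)..1, g s := by
          congr 1
          apply intervalIntegral.integral_congr
          intro s hs
          rw [Set.uIcc_of_le zero_le_one] at hs
          rw [hgdef]; simp only; rw [clampV_eq hs]
      _ = 2 * ∫ t in (0:ℝ)..T, deriv h t := by rw [hFTC]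
      _ = ∫ t in (0:ℝ)..T, 2 * deriv h t := by
          rw [intervalIntegral.integral_const_mul]
      _ ≤ _ := hmono
  · filter_upwards [hae] with t ht
    exact ht

end Main

lemma upper_bound {V : ℝ → ℝ} (hVcont : ContinuousOn V (Icc 0 1))
    (hVnonneg : ∀ s ∈ Icc (0:ℝ) 1, 0 ≤ V s) {ε : ℝ} (hε : 0 < ε) :
    ∃ c ∈ profileEnergies V, c ≤ 2 * (∫ s in (0:ℝ)..1, Real.sqrt (V s)) + 2 * Real.sqrt ε := by
  obtain ⟨M, hM0, hM⟩ := clampV_bdd hVcont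
  set f : ℝ → ℝ := fun s => Real.sqrt (clampV V s + ε) with hfdef
  have hVc := clampV_continuous hVcont
  have hVnn := clampV_nonneg hVnonneg
  have hfcont : Continuous f := (hVc.add continuous_const).sqrt
  have hfpos : ∀ s, 0 < f s := fun s => Real.sqrt_pos.2 (by linarith [hVnn s])
  have hfle : ∀ s, f s ≤ Real.sqrt (M + ε) := fun s =>
    Real.sqrt_le_sqrt (by linarith [hM s])
  have hficont : Continuous fun s => (f s)⁻¹ := hfcont.inv₀ fun s => (hfpos s).ne'
  set τ : ℝ → ℝ := fun x => ∫ s in (0:ℝ)..x, (f s)⁻¹ with hτdef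
  have hτderiv : ∀ x, HasDerivAt τ ((f x)⁻¹) x := fun x =>
    (hficont.integral_hasStrictDerivAt 0 x).hasDerivAt
  have hτdiff : Differentiable ℝ τ := fun x => (hτderiv x).differentiableAt
  have hτmono : StrictMono τ := by
    apply strictMono_of_deriv_pos
    intro x
    rw [(hτderiv x).deriv]
    exact inv_pos.2 (hfpos x)
  -- surjectivity
  have hc0pos : 0 < (Real.sqrt (M + ε))⁻¹ := inv_pos.2 (Real.sqrt_pos.2 (by linarith))
  set c0 : ℝ := (Real.sqrt (M + ε))⁻¹ with hc0def
  have hbound_inv : ∀ s, c0 ≤ (f s)⁻¹ := fun s =>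
    inv_anti₀ (hfpos s) (hfle s)
  have hlow : ∀ x : ℝ, 0 ≤ x → c0 * x ≤ τ x := by
    intro x hx
    have := intervalIntegral.integral_mono_on (μ := volume) (f := fun _ => c0)
      (g := fun s => (f s)⁻¹) hx
      intervalIntegrable_const (hficont.intervalIntegrable _ _) (fun s _ => hbound_inv s)
    simpa [mul_comm] using this
  have hhigh : ∀ x : ℝ, x ≤ 0 → τ x ≤ c0 * x := by
    intro x hx
    have h1 : c0 * (0 - x) ≤ ∫ s in x..(0:ℝ), (f s)⁻¹ := by
      have := intervalIntegral.integral_mono_on (μ := volume) (f := fun _ => c0)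
        (g := fun s => (f s)⁻¹) hx
        intervalIntegrable_const (hficont.intervalIntegrable _ _) (fun s _ => hbound_inv s)
      simpa [mul_comm] using this
    have h2 : τ x = -∫ s in x..(0:ℝ), (f s)⁻¹ := by
      rw [hτdef]; simp only
      rw [intervalIntegral.integral_symm]
    rw [h2]; linarith
  have hτsurj : Function.Surjective τ := by
    apply hτdiff.continuous.surjective
    · apply tendsto_atTop_mono' _ _ (tendsto_id.const_mul_atTop hc0pos)
      filter_upwards [eventually_ge_atTop (0:ℝ)] with x hx
      exact hlow x hx
    · apply tendsto_atBot_mono' _ _ (tendsto_id.const_mul_atBot hc0pos)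
      filter_upwards [eventually_le_atBot (0:ℝ)] with x hx
      exact hhigh x hx
  set O := StrictMono.orderIsoOfSurjective τ hτmono hτsurj with hOdef
  have hOcoe : ∀ x, O x = τ x := fun x => by
    rw [hOdef, StrictMono.coe_orderIsoOfSurjective]
  set w : ℝ → ℝ := fun t => O.symm t with hwdef
  have hwcont : Continuous w := O.symm.toHomeomorph.continuous
  have hτw : ∀ t, τ (w t) = t := fun t => by
    rw [← hOcoe]; exact O.apply_symm_apply t
  have hwτ : ∀ x, w (τ x) = x := fun x => by
    rw [hwdef]; simp only [← hOcoe]; exact O.symm_apply_apply x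
  have hτ0 : τ 0 = 0 := intervalIntegral.integral_same
  set T : ℝ := τ 1 with hTdef
  have hT : 0 < T := by rw [hTdef, ← hτ0]; exact hτmono zero_lt_one
  have hw0 : w 0 = 0 := by have := hwτ 0; rwa [hτ0] at this
  have hwT : w T = 1 := hwτ 1
  -- derivative of w
  have hwderiv : ∀ t, HasDerivAt w (f (w t)) t := by
    intro t
    have h1 : HasDerivAt τ ((f (w t))⁻¹) (w t) := hτderiv (w t)
    have h2 := HasDerivAt.of_local_left_inverse hwcont.continuousAt h1
      (inv_ne_zero (hfpos _).ne') (Eventually.of_forall hτw)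
    simpa using h2
  have hwdiff : Differentiable ℝ w := fun t => (hwderiv t).differentiableAt
  have hwderiv' : ∀ t, deriv w t = f (w t) := fun t => (hwderiv t).deriv
  -- Lipschitz
  have hwlip : LipschitzWith (Real.toNNReal (Real.sqrt (M + ε))) w := by
    apply lipschitzWith_of_nnnorm_deriv_le hwdiff
    intro x
    rw [← NNReal.coe_le_coe, coe_nnnorm, Real.norm_eq_abs,
      Real.coe_toNNReal _ (Real.sqrt_nonneg _), hwderiv' x,
      abs_of_pos (hfpos _)]
    exact hfle _
  have hwmono : Monotone w := O.symm.monotone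
  have hwmaps : ∀ t ∈ Icc (0:ℝ) T, w t ∈ Icc (0:ℝ) 1 := by
    intro t ht
    constructor
    · rw [← hw0]; exact hwmono ht.1
    · rw [← hwT]; exact hwmono ht.2
  -- energy computation
  set E : ℝ := ∫ t in (0:ℝ)..T, (V (w t) + (deriv w t) ^ 2) with hEdef
  have hmem : E ∈ profileEnergies V :=
    ⟨T, hT, w, ⟨_, hwlip.lipschitzOnWith⟩, hwmaps, hw0, hwT, rfl⟩
  refine ⟨E, hmem, ?_⟩
  have hstep1 : E = ∫ t in (0:ℝ)..T, (2 * clampV V (w t) + ε) := by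
    rw [hEdef]
    apply intervalIntegral.integral_congr
    intro t ht
    rw [Set.uIcc_of_le hT.le] at ht
    have hwt := hwmaps t ht
    show V (w t) + deriv w t ^ 2 = 2 * clampV V (w t) + ε
    rw [hwderiv' t]
    show V (w t) + Real.sqrt (clampV V (w t) + ε) ^ 2 = 2 * clampV V (w t) + ε
    rw [Real.sq_sqrt (by linarith [hVnn (w t)]), clampV_eq (V := V) hwt]
    ring
  have hgcont : Continuous fun y => 2 * clampV V (w y) + ε :=
    ((continuous_const.mul (hVc.comp hwcont)).add continuous_const)
  have hstep2 : E = ∫ x in (0:ℝ)..1, (f x)⁻¹ * (2 * clampV V x + ε) := by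
    rw [hstep1]
    have := intervalIntegral.integral_comp_smul_deriv
      (f := τ) (f' := fun x => (f x)⁻¹) (g := fun y => 2 * clampV V (w y) + ε)
      (a := 0) (b := 1) (fun x _ => hτderiv x) hficont.continuousOn hgcont
    rw [hτ0] at this
    rw [← hTdef] at this
    rw [← this]
    apply intervalIntegral.integral_congr
    intro x _
    simp [hwτ x]
  have hstep3 : E ≤ ∫ x in (0:ℝ)..1, (2 * Real.sqrt (clampV V x) + 2 * Real.sqrt ε) := by
    rw [hstep2]
    have hg2cont : Continuous fun x => (f x)⁻¹ * (2 * clampV V x + ε) :=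
      hficont.mul ((continuous_const.mul hVc).add continuous_const)
    apply intervalIntegral.integral_mono_on zero_le_one
      (hg2cont.intervalIntegrable _ _)
      (Continuous.intervalIntegrable (u := fun x => 2 * Real.sqrt (clampV V x) + 2 * Real.sqrt ε) ((continuous_const.mul hVc.sqrt).add continuous_const) _ _)
    intro x _
    set v : ℝ := clampV V x with hvdef
    have hv : 0 ≤ v := hVnn x
    have ha : 0 < Real.sqrt (v + ε) := Real.sqrt_pos.2 (by linarith)
    rw [inv_mul_le_iff₀ ha]
    have ha2 : Real.sqrt (v + ε) ^ 2 = v + ε := Real.sq_sqrt (by linarith)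
    have hb2 : Real.sqrt v ^ 2 = v := Real.sq_sqrt hv
    have hc2 : Real.sqrt ε ^ 2 = ε := Real.sq_sqrt hε.le
    have hb : 0 ≤ Real.sqrt v := Real.sqrt_nonneg v
    have hcnn : 0 ≤ Real.sqrt ε := Real.sqrt_nonneg ε
    have hba : Real.sqrt v ≤ Real.sqrt (v + ε) := Real.sqrt_le_sqrt (by linarith)
    have habc : Real.sqrt (v + ε) ≤ Real.sqrt v + Real.sqrt ε := by
      rw [show v + ε = Real.sqrt v ^ 2 + Real.sqrt ε ^ 2 by rw [hb2, hc2]]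
      calc Real.sqrt (Real.sqrt v ^ 2 + Real.sqrt ε ^ 2)
          ≤ Real.sqrt ((Real.sqrt v + Real.sqrt ε) ^ 2) :=
            Real.sqrt_le_sqrt (by nlinarith)
        _ = Real.sqrt v + Real.sqrt ε := Real.sqrt_sq (by positivity)
    nlinarith [mul_le_mul_of_nonneg_right hba hb,
      mul_le_mul_of_nonneg_left habc ha.le]
  have hstep4 : ∫ x in (0:ℝ)..1, (2 * Real.sqrt (clampV V x) + 2 * Real.sqrt ε)
      = 2 * (∫ s in (0:ℝ)..1, Real.sqrt (V s)) + 2 * Real.sqrt ε := by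
    rw [intervalIntegral.integral_add
      (Continuous.intervalIntegrable (u := fun x => 2 * Real.sqrt (clampV V x)) (continuous_const.mul hVc.sqrt) _ _) intervalIntegrable_const]
    rw [intervalIntegral.integral_const]
    rw [intervalIntegral.integral_const_mul]
    have : ∫ x in (0:ℝ)..1, Real.sqrt (clampV V x) = ∫ s in (0:ℝ)..1, Real.sqrt (V s) := by
      apply intervalIntegral.integral_congr
      intro s hs
      rw [Set.uIcc_of_le zero_le_one] at hs
      show Real.sqrt (clampV V s) = Real.sqrt (V s)
      rw [clampV_eq (V := V) hs]
    rw [this]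
    simp
  rw [← hstep4]
  exact hstep3


/-- For continuous V : [0,1] → [0,∞) with V(1) = 0, the constant 2∫₀¹√V equals the infimum
over T > 0 of the minimal profile energy ∫₀ᵀ (V(w) + |w'|²) dt among Lipschitz
w : [0,T] → [0,1] with w(0)=0, w(T)=1. -/
theorem stmt_7 (V : ℝ → ℝ) (hVcont : ContinuousOn V (Icc 0 1))
    (hVnonneg : ∀ s ∈ Icc (0:ℝ) 1, 0 ≤ V s) (hV1 : V 1 = 0) :
    sInf (profileEnergies V) = 2 * ∫ s in (0:ℝ)..1, Real.sqrt (V s) := by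

  obtain ⟨c1, hc1mem, _⟩ := upper_bound hVcont hVnonneg one_pos
  have hne : (profileEnergies V).Nonempty := ⟨c1, hc1mem⟩
  have hlb : ∀ c ∈ profileEnergies V, 2 * (∫ s in (0:ℝ)..1, Real.sqrt (V s)) ≤ c := by
    rintro c ⟨T, hT, w, ⟨L, hL⟩, hmaps, h0, h1, rfl⟩
    exact lower_bound hVcont hVnonneg hT hL hmaps h0 h1
  have hbdd : BddBelow (profileEnergies V) := ⟨_, fun c hc => hlb c hc⟩
  apply le_antisymm
  · apply le_of_forall_pos_le_add
    intro η hη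
    obtain ⟨c, hcmem, hcle⟩ := upper_bound hVcont hVnonneg (ε := (η / 2) ^ 2) (by positivity)
    have hsq : Real.sqrt ((η / 2) ^ 2) = η / 2 := Real.sqrt_sq (by positivity)
    rw [hsq] at hcle
    have := csInf_le hbdd hcmem
    linarith
  · exact le_csInf hne hlb
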